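/- For every n-uniform hypergraph H with m edges, if m < 2^(n-1) then H is 2-colorable (has property B). Equivalently, m(n) ≥ 2^(n-1). -/

import Mathlib

/-- Erdős' bound: an `n`-uniform hypergraph with fewer than `2^(n-1)` edges has
property B (is 2-colorable); equivalently `m(n) ≥ 2^(n-1)`. -/
theorem erdos_lower_bound (n : ℕ) (V : Type) [Fintype V] [DecidableEq V]
    (E : Finset (Finset V)) (hunif : ∀ e ∈ E, e.card = n)
    (hm : E.card < 2 ^ (n - 1)) :
    ∃ c : V → Bool, ∀ e ∈ E, (∃ x ∈ e, c x = true) ∧ (∃ x ∈ e, c x = false) := by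
  classical
  rcases E.eq_empty_or_nonempty with rfl | hne
  · exact ⟨fun _ => true, by simp⟩
  obtain ⟨e0, he0⟩ := hne
  have hEpos : 0 < E.card := Finset.card_pos.mpr ⟨e0, he0⟩
  set N := Fintype.card V with hNdef
  have hnN : n ≤ N := by
    rw [← hunif e0 he0]; exact Finset.card_le_univ e0
  have hn1 : 1 ≤ n := by
    by_contra hn
    have hn0 : n = 0 := by omega
    subst hn0
    simp only [Nat.zero_sub, pow_zero] at hm
    omega
  -- count monochromatic colorings for a single edge and color
  have key : ∀ e ∈ E, ∀ b : Bool,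
      (Finset.univ.filter (fun c : V → Bool => ∀ x ∈ e, c x = b)).card ≤ 2 ^ (N - n) := by
    intro e he b
    have hmap : ∀ c ∈ Finset.univ.filter (fun c : V → Bool => ∀ x ∈ e, c x = b),
        (fun x : {x : V // x ∉ e} => c x.1) ∈
          (Finset.univ : Finset ({x : V // x ∉ e} → Bool)) := fun _ _ => Finset.mem_univ _
    calc (Finset.univ.filter (fun c : V → Bool => ∀ x ∈ e, c x = b)).card
        ≤ (Finset.univ : Finset ({x : V // x ∉ e} → Bool)).card := by
          apply Finset.card_le_card_of_injOn (fun c => fun x => c x.1) (fun c hc => hmap c hc)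
          intro c1 h1 c2 h2 hEq
          simp only [Finset.coe_filter, Set.mem_setOf_eq, Finset.mem_univ, true_and] at h1 h2
          funext x
          by_cases hx : x ∈ e
          · rw [h1 x hx, h2 x hx]
          · exact congrFun hEq ⟨x, hx⟩
      _ = 2 ^ (N - n) := by
          rw [Finset.card_univ, Fintype.card_fun, Fintype.card_bool, Fintype.card_subtype]
          congr 1
          have h1 := Finset.card_filter_add_card_filter_not
            (s := (Finset.univ : Finset V)) (p := fun x => x ∈ e)
          have h2 : (Finset.univ.filter (fun x => x ∈ e)).card = n := by
            rw [Finset.filter_univ_mem]; exact hunif e he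
          rw [Finset.card_univ] at h1
          omega
  -- the bad set
  set Bad := Finset.univ.filter
    (fun c : V → Bool => ∃ e ∈ E, (∀ x ∈ e, c x = true) ∨ (∀ x ∈ e, c x = false)) with hBad
  have hBadCard : Bad.card < 2 ^ N := by
    have hsub : Bad ⊆ E.biUnion (fun e => Finset.univ.filter
        (fun c : V → Bool => (∀ x ∈ e, c x = true) ∨ (∀ x ∈ e, c x = false))) := by
      intro c hc
      simp only [hBad, Finset.mem_filter, Finset.mem_univ, true_and] at hc
      obtain ⟨e, heE, hmono⟩ := hc
      exact Finset.mem_biUnion.mpr ⟨e, heE, Finset.mem_filter.mpr ⟨Finset.mem_univ _, hmono⟩⟩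
    have hstep : ∀ e ∈ E,
        (Finset.univ.filter (fun c : V → Bool =>
          (∀ x ∈ e, c x = true) ∨ (∀ x ∈ e, c x = false))).card ≤ 2 ^ (N - n + 1) := by
      intro e he
      have hsplit : Finset.univ.filter (fun c : V → Bool =>
          (∀ x ∈ e, c x = true) ∨ (∀ x ∈ e, c x = false)) ⊆
          Finset.univ.filter (fun c : V → Bool => ∀ x ∈ e, c x = true) ∪
          Finset.univ.filter (fun c : V → Bool => ∀ x ∈ e, c x = false) := by
        intro c hc
        simp only [Finset.mem_filter, Finset.mem_univ, true_and, Finset.mem_union] at *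
        tauto
      calc _ ≤ _ := Finset.card_le_card hsplit
        _ ≤ (Finset.univ.filter (fun c : V → Bool => ∀ x ∈ e, c x = true)).card +
            (Finset.univ.filter (fun c : V → Bool => ∀ x ∈ e, c x = false)).card :=
          Finset.card_union_le _ _
        _ ≤ 2 ^ (N - n) + 2 ^ (N - n) := Nat.add_le_add (key e he true) (key e he false)
        _ = 2 ^ (N - n + 1) := by ring
    calc Bad.card ≤ _ := Finset.card_le_card hsub
      _ ≤ ∑ e ∈ E, (Finset.univ.filter (fun c : V → Bool =>
            (∀ x ∈ e, c x = true) ∨ (∀ x ∈ e, c x = false))).card :=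
        Finset.card_biUnion_le
      _ ≤ ∑ _e ∈ E, 2 ^ (N - n + 1) := Finset.sum_le_sum hstep
      _ = E.card * 2 ^ (N - n + 1) := by rw [Finset.sum_const, smul_eq_mul]
      _ < 2 ^ (n - 1) * 2 ^ (N - n + 1) :=
        Nat.mul_lt_mul_of_pos_right hm (Nat.pow_pos (by norm_num))
      _ = 2 ^ N := by
        rw [← pow_add]
        congr 1
        omega
  -- find a good coloring
  have hlt : Bad.card < (Finset.univ : Finset (V → Bool)).card := by
    rwa [Finset.card_univ, Fintype.card_fun, Fintype.card_bool]
  have hsd : ((Finset.univ : Finset (V → Bool)) \ Bad).Nonempty := by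
    rw [← Finset.card_pos, Finset.card_sdiff_of_subset (Finset.subset_univ _)]
    omega
  obtain ⟨c, hcm⟩ := hsd
  have hc : c ∉ Bad := (Finset.mem_sdiff.mp hcm).2
  refine ⟨c, fun e heE => ?_⟩
  simp only [hBad, Finset.mem_filter, Finset.mem_univ, true_and, not_exists] at hc
  have h := hc e
  push_neg at h
  obtain ⟨⟨x, hx, hxt⟩, ⟨y, hy, hyf⟩⟩ := h heE
  exact ⟨⟨y, hy, by simpa using hyf⟩, ⟨x, hx, by simpa using hxt⟩⟩
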